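/- For a double Lie group (G; A, B), for b ∈ B and a ∈ A with block decompositions Ad(a) = (α₁ α₂; 0 α₄) and Ad(b) = (β₁ 0; β₃ β₄) with respect to 𝔤 = 𝔞 ⊕ 𝔟, one has Q(b·a) = det(β₄ α₄) / det(β₃ α₂ + β₄ α₄). -/

import Mathlib

open Polynomial

/-! ### Auxiliary determinant lemmas -/

lemma Matrix.det_one_add_of_sq_eq_zero' {n : Type*} [DecidableEq n] [Fintype n]
    (M : Matrix n n ℝ) (hM : M * M = 0) : (1 + M).det = 1 := by
  have hnil : IsNilpotent M := ⟨2, by rw [pow_two, hM]⟩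
  have hu := Matrix.isUnit_charpolyRev_of_isNilpotent hnil
  rcases Polynomial.isUnit_iff.mp hu with ⟨c, -, hce⟩
  have h0 : M.charpolyRev.eval 0 = 1 := Matrix.eval_charpolyRev
  rw [← hce, eval_C] at h0
  have hcp : M.charpolyRev = 1 := by rw [← hce, h0, Polynomial.C_1]
  have h := congrArg (Polynomial.eval (-1)) hcp
  rw [Matrix.charpolyRev, eval_one, ← coe_evalRingHom, RingHom.map_det,
    RingHom.mapMatrix_apply] at h
  have hmap : (1 - (X : ℝ[X]) • M.map C).map (evalRingHom (-1)) = 1 + M := by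
    ext i j
    simp only [Matrix.map_apply, Matrix.sub_apply, Matrix.smul_apply, Matrix.one_apply,
      Matrix.add_apply, smul_eq_mul, map_sub, map_mul, coe_evalRingHom, eval_X, eval_C]
    split_ifs <;> simp
  rwa [hmap] at h

lemma End.det_one_add_of_sq_eq_zero {V : Type*} [AddCommGroup V] [Module ℝ V]
    [FiniteDimensional ℝ V] (w : Module.End ℝ V) (hw : w * w = 0) :
    LinearMap.det (1 + w) = 1 := by
  let b := Module.finBasis ℝ V
  rw [← LinearMap.det_toMatrix b]
  have h1 : LinearMap.toMatrix b b (1 + w) = 1 + LinearMap.toMatrix b b w := by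
    rw [map_add, LinearMap.toMatrix_one]
  rw [h1]
  apply Matrix.det_one_add_of_sq_eq_zero'
  rw [← LinearMap.toMatrix_mul, hw, map_zero]

lemma End.isUnit_of_det_ne_zero' {V : Type*} [AddCommGroup V] [Module ℝ V]
    [FiniteDimensional ℝ V] (f : Module.End ℝ V) (hf : LinearMap.det f ≠ 0) :
    IsUnit f := by
  let b := Module.finBasis ℝ V
  have h : IsUnit (LinearMap.toMatrixAlgEquiv b f) := by
    rw [Matrix.isUnit_iff_isUnit_det]
    refine isUnit_iff_ne_zero.mpr ?_
    have : LinearMap.toMatrixAlgEquiv b f = LinearMap.toMatrix b b f := rfl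
    rwa [this, LinearMap.det_toMatrix]
  have h2 := h.map (LinearMap.toMatrixAlgEquiv b).symm
  rwa [AlgEquiv.symm_apply_apply] at h2

/-! ### Ring identities for a pair of complementary idempotents -/

section Identities

variable {R : Type*} [Ring R] (p q : R)

lemma qba_I1 (m n : R) (hsum : p + q = 1) (hp : p*p = p) (hq : q*q = q)
    (hpq : p*q = 0) (hqp : q*p = 0) (hm : p*m*q = 0) :
    (p*m*p + q) * (p*n*p + q) = p*(m*n)*p + q := by
  have hp' : ∀ x : R, p*(p*x) = p*x := fun x => by rw [← mul_assoc, hp]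
  have hqp' : ∀ x : R, q*(p*x) = 0 := fun x => by rw [← mul_assoc, hqp, zero_mul]
  have hm' : ∀ x : R, p*(m*(q*x)) = 0 := fun x => by
    rw [← mul_assoc, ← mul_assoc, hm, zero_mul]
  have key : p*(m*(n*p)) = p*(m*(p*(n*p))) := by
    have h1 : m*(n*p) = m*(p*(n*p)) + m*(q*(n*p)) := by
      rw [← mul_add, ← add_mul, hsum, one_mul]
    rw [h1, mul_add, hm', add_zero]
  simp only [mul_add, add_mul, mul_assoc]
  rw [key]
  simp only [hp', hqp', hp, hq, hpq, hqp, mul_zero, zero_mul, add_zero, zero_add]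

lemma qba_I2 (m n : R) (hp : p*p = p) (hq : q*q = q)
    (hpq : p*q = 0) (hqp : q*p = 0) :
    (q*m*q + p) * (q*n*q + p) = (q*m*q)*(q*n*q) + p := by
  have hq' : ∀ x : R, q*(q*x) = q*x := fun x => by rw [← mul_assoc, hq]
  have hpq' : ∀ x : R, p*(q*x) = 0 := fun x => by rw [← mul_assoc, hpq, zero_mul]
  simp only [mul_add, add_mul, mul_assoc]
  simp only [hq', hpq', hp, hq, hpq, hqp, mul_zero, zero_mul, add_zero, zero_add]

lemma qba_I3 (m n : R) (hsum : p + q = 1) (hp : p*p = p) (hq : q*q = q) :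
    q*(m*n)*q = (q*m*p)*(p*n*q) + (q*m*q)*(q*n*q) := by
  have hp' : ∀ x : R, p*(p*x) = p*x := fun x => by rw [← mul_assoc, hp]
  have hq' : ∀ x : R, q*(q*x) = q*x := fun x => by rw [← mul_assoc, hq]
  have h1 : m*(n*q) = m*(p*(n*q)) + m*(q*(n*q)) := by
    rw [← mul_add, ← add_mul, hsum, one_mul]
  simp only [mul_assoc]
  rw [h1, mul_add]
  simp only [hp', hq']

lemma qba_I4 (m : R) (hsum : p + q = 1) (hp : p*p = p) (hq : q*q = q)
    (hpq : p*q = 0) (hqp : q*p = 0) (hm : p*m*q = 0) :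
    (p*m*p + q*m*p + q) * (q*m*q + p) = m := by
  have hp' : ∀ x : R, p*(p*x) = p*x := fun x => by rw [← mul_assoc, hp]
  have hq' : ∀ x : R, q*(q*x) = q*x := fun x => by rw [← mul_assoc, hq]
  have hpq' : ∀ x : R, p*(q*x) = 0 := fun x => by rw [← mul_assoc, hpq, zero_mul]
  have hqp' : ∀ x : R, q*(p*x) = 0 := fun x => by rw [← mul_assoc, hqp, zero_mul]
  have hm0 : p*(m*q) = 0 := by rw [← mul_assoc, hm]
  have hmexp : m = p*(m*p) + (q*(m*p) + q*(m*q)) := by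
    have h1 : (p+q)*(m*(p+q)) = p*(m*p) + (q*(m*p) + q*(m*q)) := by
      simp only [mul_add, add_mul, hm0, add_zero, zero_add]
      abel
    rw [← h1, hsum, one_mul, mul_one]
  conv_rhs => rw [hmexp]
  simp only [mul_add, add_mul, mul_assoc]
  simp only [hp', hq', hpq', hqp', hp, hq, hpq, hqp, mul_zero, zero_mul, add_zero, zero_add]
  abel

lemma qba_I5 (n : R) (hsum : p + q = 1) (hp : p*p = p) (hq : q*q = q)
    (hpq : p*q = 0) (hqp : q*p = 0) (hn : q*n*p = 0) :
    (q*n*q + p) * (p*n*p + p*n*q + q) = n := by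
  have hp' : ∀ x : R, p*(p*x) = p*x := fun x => by rw [← mul_assoc, hp]
  have hq' : ∀ x : R, q*(q*x) = q*x := fun x => by rw [← mul_assoc, hq]
  have hpq' : ∀ x : R, p*(q*x) = 0 := fun x => by rw [← mul_assoc, hpq, zero_mul]
  have hqp' : ∀ x : R, q*(p*x) = 0 := fun x => by rw [← mul_assoc, hqp, zero_mul]
  have hn' : ∀ x : R, q*(n*(p*x)) = 0 := fun x => by
    rw [← mul_assoc, ← mul_assoc, hn, zero_mul]
  have hn0 : q*(n*p) = 0 := by rw [← mul_assoc, hn]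
  have hnexp : n = p*(n*p) + (p*(n*q) + q*(n*q)) := by
    have h1 : (p+q)*(n*(p+q)) = p*(n*p) + (p*(n*q) + q*(n*q)) := by
      simp only [mul_add, add_mul, hn0, add_zero, zero_add]
    rw [← h1, hsum, one_mul, mul_one]
  conv_rhs => rw [hnexp]
  simp only [mul_add, add_mul, mul_assoc]
  simp only [hp', hq', hpq', hqp', hn', hn0, hp, hq, hpq, hqp, mul_zero, zero_mul,
    add_zero, zero_add]
  abel

lemma qba_facL (m s : R) (hp : p*p = p) (hq : q*q = q)
    (hpq : p*q = 0) (hqp : q*p = 0) (hm : p*m*q = 0) (hsum : p + q = 1)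
    (hs1 : s*(p*m*p + q) = 1) (hs2 : (p*m*p + q)*s = 1) :
    ∃ w : R, w*w = 0 ∧ m = ((1+w)*(p*m*p + q))*(q*m*q + p) := by
  have hp' : ∀ x : R, p*(p*x) = p*x := fun x => by rw [← mul_assoc, hp]
  set T := p*m*p + q with hT
  have hpT : p*T = T*p := by
    rw [hT]
    simp only [mul_add, add_mul, mul_assoc, hp', hpq, hqp, hp, add_zero, zero_add]
  have hsp : s*p = p*s := by
    have c3 : p*(T*s) = T*(p*s) := by rw [← mul_assoc, hpT, mul_assoc]
    calc s*p = s*(p*(T*s)) := by rw [hs2, mul_one]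
      _ = s*(T*(p*s)) := by rw [c3]
      _ = p*s := by rw [← mul_assoc, hs1, one_mul]
  have h0 : p*s*q = 0 := by rw [← hsp, mul_assoc, hpq, mul_zero]
  have hpsq' : ∀ x : R, p*(s*(q*x)) = 0 := fun x => by
    rw [← mul_assoc, ← mul_assoc, h0, zero_mul]
  refine ⟨q*(m*(p*s)), ?_, ?_⟩
  · simp only [mul_assoc, hpsq', mul_zero]
  · have hL : (1 + q*(m*(p*s)))*T = p*m*p + q*m*p + q := by
      have hwT : (q*(m*(p*s)))*T = q*(m*p) := by
        simp only [mul_assoc]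
        rw [hs1, mul_one]
      rw [add_mul, one_mul, hwT, hT, mul_assoc q m p]
      abel
    rw [hL, qba_I4 p q m hsum hp hq hpq hqp hm]

lemma qba_facU (n s : R) (hp : p*p = p) (hq : q*q = q)
    (hpq : p*q = 0) (hqp : q*p = 0) (hn : q*n*p = 0) (hsum : p + q = 1)
    (hs1 : s*(p*n*p + q) = 1) (hs2 : (p*n*p + q)*s = 1) :
    ∃ w : R, w*w = 0 ∧ n = (q*n*q + p)*((p*n*p + q)*(1+w)) := by
  have hp' : ∀ x : R, p*(p*x) = p*x := fun x => by rw [← mul_assoc, hp]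
  set T := p*n*p + q with hT
  have hpT : p*T = T*p := by
    rw [hT]
    simp only [mul_add, add_mul, mul_assoc, hp', hpq, hqp, hp, add_zero, zero_add]
  have hsp : s*p = p*s := by
    have c3 : p*(T*s) = T*(p*s) := by rw [← mul_assoc, hpT, mul_assoc]
    calc s*p = s*(p*(T*s)) := by rw [hs2, mul_one]
      _ = s*(T*(p*s)) := by rw [c3]
      _ = p*s := by rw [← mul_assoc, hs1, one_mul]
  have h0 : q*s*p = 0 := by rw [mul_assoc, hsp, ← mul_assoc, hqp, zero_mul]
  have hqsp' : ∀ x : R, q*(s*(p*x)) = 0 := fun x => by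
    rw [← mul_assoc, ← mul_assoc, h0, zero_mul]
  refine ⟨s*(p*(n*q)), ?_, ?_⟩
  · simp only [mul_assoc, hqsp', mul_zero]
  · have hL : T*(1 + s*(p*(n*q))) = p*n*p + p*n*q + q := by
      have hwT : T*(s*(p*(n*q))) = p*(n*q) := by
        rw [← mul_assoc, hs2, one_mul]
      rw [mul_add, mul_one, hwT, hT, mul_assoc p n q]
      abel
    rw [hL, qba_I5 p q n hsum hp hq hpq hqp hn]

end Identities

/-- The function `Q(g) = det(Ad g) / (det g₁ · det g₄)`. -/
noncomputable def Qfun {G V : Type*} [Group G] [AddCommGroup V] [Module ℝ V]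
    (Ad : G →* Module.End ℝ V) (PA PB : Module.End ℝ V) (g : G) : ℝ :=
  LinearMap.det ((Ad g : Module.End ℝ V)) /
    (LinearMap.det (PA * Ad g * PA + PB) * LinearMap.det (PB * Ad g * PB + PA))

/-- For `b ∈ B`, `a ∈ A` with blocks `Ad a = (α₁ α₂; 0 α₄)`,
`Ad b = (β₁ 0; β₃ β₄)`, one has `Q(b·a) = det(β₄α₄) / det(β₃α₂ + β₄α₄)`. -/
theorem Q_ba_formula {G V : Type*} [Group G] [AddCommGroup V] [Module ℝ V]
    [FiniteDimensional ℝ V]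
    (A B : Subgroup G) (hAB : A ⊓ B = ⊥)
    (hG : ∀ g : G, ∃ a ∈ A, ∃ b ∈ B, g = a * b)
    (Ad : G →* Module.End ℝ V) (PA PB : Module.End ℝ V)
    (hsum : PA + PB = 1) (hPA : PA * PA = PA) (hPB : PB * PB = PB)
    (hPAB : PA * PB = 0) (hPBA : PB * PA = 0)
    (htriA : ∀ a ∈ A, PB * Ad a * PA = 0)
    (htriB : ∀ b ∈ B, PA * Ad b * PB = 0)
    (hinv : ∀ g : G, LinearMap.det (PA * Ad g * PA + PB) ≠ 0 ∧
      LinearMap.det (PB * Ad g * PB + PA) ≠ 0) :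
    ∀ b ∈ B, ∀ a ∈ A,
      Qfun Ad PA PB (b * a) =
        LinearMap.det ((PB * Ad b * PB) * (PB * Ad a * PB) + PA) /
          LinearMap.det ((PB * Ad b * PA) * (PA * Ad a * PB) +
            (PB * Ad b * PB) * (PB * Ad a * PB) + PA) := by
  intro b hb a ha
  have hmb := htriB b hb
  have hna := htriA a ha
  have detmul : ∀ f g : Module.End ℝ V,
      LinearMap.det (f*g) = LinearMap.det f * LinearMap.det g :=
    fun f g => map_mul LinearMap.det f g
  obtain ⟨w, hw2, hfacm⟩ :
      ∃ w, w*w = 0 ∧ Ad b = ((1+w)*(PA*Ad b*PA + PB))*(PB*Ad b*PB + PA) := by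
    obtain ⟨u, hu⟩ := End.isUnit_of_det_ne_zero' _ (hinv b).1
    refine qba_facL PA PB (Ad b) (↑u⁻¹) hPA hPB hPAB hPBA hmb hsum ?_ ?_
    · rw [← hu]; exact Units.inv_mul _
    · rw [← hu]; exact Units.mul_inv _
  obtain ⟨w', hw2', hfacn⟩ :
      ∃ w', w'*w' = 0 ∧ Ad a = (PB*Ad a*PB + PA)*((PA*Ad a*PA + PB)*(1+w')) := by
    obtain ⟨u, hu⟩ := End.isUnit_of_det_ne_zero' _ (hinv a).1
    refine qba_facU PA PB (Ad a) (↑u⁻¹) hPA hPB hPAB hPBA hna hsum ?_ ?_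
    · rw [← hu]; exact Units.inv_mul _
    · rw [← hu]; exact Units.mul_inv _
  have Fm : LinearMap.det (Ad b)
      = LinearMap.det (PA*Ad b*PA + PB) * LinearMap.det (PB*Ad b*PB + PA) := by
    conv_lhs => rw [hfacm]
    rw [detmul, detmul, End.det_one_add_of_sq_eq_zero w hw2, one_mul]
  have Fn : LinearMap.det (Ad a)
      = LinearMap.det (PA*Ad a*PA + PB) * LinearMap.det (PB*Ad a*PB + PA) := by
    conv_lhs => rw [hfacn]
    rw [detmul, detmul, End.det_one_add_of_sq_eq_zero w' hw2', mul_one, mul_comm]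
  have F3 : LinearMap.det (PA * (Ad b * Ad a) * PA + PB)
      = LinearMap.det (PA*Ad b*PA + PB) * LinearMap.det (PA*Ad a*PA + PB) := by
    rw [← qba_I1 PA PB (Ad b) (Ad a) hsum hPA hPB hPAB hPBA hmb, detmul]
  have F4 : LinearMap.det ((PB*Ad b*PB)*(PB*Ad a*PB) + PA)
      = LinearMap.det (PB*Ad b*PB + PA) * LinearMap.det (PB*Ad a*PB + PA) := by
    rw [← qba_I2 PA PB (Ad b) (Ad a) hPA hPB hPAB hPBA, detmul]
  have F5 : (PB*Ad b*PA)*(PA*Ad a*PB) + (PB*Ad b*PB)*(PB*Ad a*PB) + PA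
      = PB * (Ad b * Ad a) * PB + PA := by
    rw [qba_I3 PA PB (Ad b) (Ad a) hsum hPA hPB]
  have hTm : LinearMap.det (PA*Ad b*PA + PB) ≠ 0 := (hinv b).1
  have hTn : LinearMap.det (PA*Ad a*PA + PB) ≠ 0 := (hinv a).1
  have hdX : LinearMap.det (PB * (Ad b * Ad a) * PB + PA) ≠ 0 := by
    have h := (hinv (b*a)).2
    rwa [map_mul Ad] at h
  simp only [Qfun, map_mul Ad]
  rw [F5, F4, F3, detmul, Fm, Fn]
  field_simp
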